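/- Fix M > 0 and s ∈ {0,1,2}, set σ = 1 − s², and let ℓ ∈ ℕ₀ with ℓ ≥ s. Let v be a solution of the zero-energy radial equation −(1 − 2M/r) v'' − (2M/r²) v' + (ℓ(ℓ+1)/r² + 2Mσ/r³) v = 0 on (2M, ∞). Then the substitution u(z) := z^{−(1+s)} v(2Mz) transforms this ODE into the hypergeometric equation z(1−z) u'' + [c − (a+b+1)z] u' − ab·u = 0 with parameters a = −ℓ + s, b = ℓ + 1 + s, c = 1 + 2s. -/

import Mathlib

open Set

/-- The substitution `u(z) = z^{−(1+s)} v(2Mz)` transforms the zero-energy radial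
Regge–Wheeler equation (spin `s`, `σ = 1 − s²`) into the hypergeometric equation
`z(1−z)u'' + [c − (a+b+1)z]u' − ab·u = 0` with `a = −ℓ+s`, `b = ℓ+1+s`, `c = 1+2s`. -/
theorem hypergeometric_reduction
    (M : ℝ) (hM : 0 < M) (s : ℕ) (hs : s = 0 ∨ s = 1 ∨ s = 2)
    (σ : ℝ) (hσ : σ = 1 - (s : ℝ) ^ 2) (ℓ : ℕ) (hℓs : s ≤ ℓ)
    (v : ℝ → ℝ) (hv : ContDiffOn ℝ 2 v (Set.Ioi (2 * M)))
    (hODE : ∀ r ∈ Set.Ioi (2 * M),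
      -(1 - 2 * M / r) * deriv (deriv v) r - (2 * M / r ^ 2) * deriv v r +
        ((ℓ * (ℓ + 1) : ℝ) / r ^ 2 + 2 * M * σ / r ^ 3) * v r = 0) :
    ∀ z ∈ Set.Ioi (1 : ℝ),
      z * (1 - z) * deriv (deriv fun t : ℝ => v (2 * M * t) / t ^ (1 + s)) z +
        ((1 + 2 * s : ℝ) - ((-(ℓ : ℝ) + s) + ((ℓ : ℝ) + 1 + s) + 1) * z) *
          deriv (fun t : ℝ => v (2 * M * t) / t ^ (1 + s)) z -
        (-(ℓ : ℝ) + s) * ((ℓ : ℝ) + 1 + s) * (v (2 * M * z) / z ^ (1 + s)) = 0 := by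
  have hopen : IsOpen (Ioi (1:ℝ)) := isOpen_Ioi
  have h1 : DifferentiableOn ℝ v (Ioi (2*M)) := hv.differentiableOn (by norm_num)
  have h2' : ContDiffOn ℝ 1 (deriv v) (Ioi (2*M)) := by
    simpa using hv.deriv_of_isOpen isOpen_Ioi (by norm_num)
  have h2 : DifferentiableOn ℝ (deriv v) (Ioi (2*M)) := h2'.differentiableOn (by norm_num)
  have hmem : ∀ t : ℝ, t ∈ Ioi (1:ℝ) → 2*M*t ∈ Ioi (2*M) := by
    intro t ht
    simp only [mem_Ioi] at *
    nlinarith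
  have hvd : ∀ t ∈ Ioi (1:ℝ), HasDerivAt (fun x => v (2*M*x)) (2*M * deriv v (2*M*t)) t := by
    intro t ht
    have hin : HasDerivAt (fun x : ℝ => 2*M*x) (2*M) t := by
      simpa using (hasDerivAt_id t).const_mul (2*M)
    have hvt : HasDerivAt v (deriv v (2*M*t)) (2*M*t) :=
      (h1.differentiableAt (isOpen_Ioi.mem_nhds (hmem t ht))).hasDerivAt
    have h' : HasDerivAt (fun x => v (2*M*x)) (deriv v (2*M*t) * (2*M)) t := hvt.comp t hin
    simpa [mul_comm] using h'
  have hBd : ∀ t ∈ Ioi (1:ℝ),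
      HasDerivAt (fun x => deriv v (2*M*x)) (2*M * deriv (deriv v) (2*M*t)) t := by
    intro t ht
    have hin : HasDerivAt (fun x : ℝ => 2*M*x) (2*M) t := by
      simpa using (hasDerivAt_id t).const_mul (2*M)
    have hvt : HasDerivAt (deriv v) (deriv (deriv v) (2*M*t)) (2*M*t) :=
      (h2.differentiableAt (isOpen_Ioi.mem_nhds (hmem t ht))).hasDerivAt
    have h' : HasDerivAt (fun x => deriv v (2*M*x)) (deriv (deriv v) (2*M*t) * (2*M)) t :=
      hvt.comp t hin
    simpa [mul_comm] using h'
  set u : ℝ → ℝ := fun t => v (2*M*t) / t^(1+s) with hu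
  set w : ℝ → ℝ := fun t => (2*M*deriv v (2*M*t) * t - (1+s:ℝ) * v (2*M*t)) / t^(2+s) with hwdef
  have hwD : ∀ t ∈ Ioi (1:ℝ), HasDerivAt u (w t) t := by
    intro t ht
    have ht1 : (1:ℝ) < t := ht
    have ht0 : t ≠ 0 := by linarith
    have hg : HasDerivAt (fun x : ℝ => x^(1+s)) ((1+s : ℕ) * t^s) t := by
      simpa using hasDerivAt_pow (1+s) t
    have h : HasDerivAt u _ t := (hvd t ht).div hg (pow_ne_zero _ ht0)
    convert h using 1
    simp only [hwdef]
    push_cast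
    field_simp
    ring
  intro z hz
  have hz1 : (1:ℝ) < z := hz
  have hz0 : z ≠ 0 := by linarith
  have hdu : ∀ t ∈ Ioi (1:ℝ), deriv u t = w t := fun t ht => (hwD t ht).deriv
  -- second derivative
  have hNd : HasDerivAt (fun t => 2*M*deriv v (2*M*t) * t - (1+s:ℝ) * v (2*M*t))
      ((2*M * (2*M*deriv (deriv v) (2*M*z))) * z + 2*M*deriv v (2*M*z) * 1
        - (1+s:ℝ) * (2*M * deriv v (2*M*z))) z := by
    exact (((hBd z hz).const_mul (2*M)).mul (hasDerivAt_id z)).sub ((hvd z hz).const_mul (1+s:ℝ))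
  have hg2 : HasDerivAt (fun x : ℝ => x^(2+s)) ((2+s : ℕ) * z^(1+s)) z := by
    simpa using hasDerivAt_pow (2+s) z
  have hwz : HasDerivAt w
      ((((2*M * (2*M*deriv (deriv v) (2*M*z))) * z + 2*M*deriv v (2*M*z) * 1
        - (1+s:ℝ) * (2*M * deriv v (2*M*z))) * z^(2+s)
        - (2*M*deriv v (2*M*z) * z - (1+s:ℝ) * v (2*M*z)) * ((2+s : ℕ) * z^(1+s)))
        / (z^(2+s))^2) z :=
    hNd.div hg2 (pow_ne_zero _ hz0)
  have hdd : deriv (deriv u) z = (((2*M * (2*M*deriv (deriv v) (2*M*z))) * z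
        + 2*M*deriv v (2*M*z) * 1 - (1+s:ℝ) * (2*M * deriv v (2*M*z))) * z^(2+s)
        - (2*M*deriv v (2*M*z) * z - (1+s:ℝ) * v (2*M*z)) * ((2+s : ℕ) * z^(1+s)))
        / (z^(2+s))^2 := by
    have heq : deriv u =ᶠ[nhds z] w :=
      Filter.eventuallyEq_of_mem (hopen.mem_nhds hz) hdu
    rw [heq.deriv_eq]
    exact hwz.deriv
  have hdu1 : deriv u z = w z := hdu z hz
  -- ODE at 2Mz
  have hO := hODE (2*M*z) (hmem z hz)
  have hr0 : (2*M*z) ≠ 0 := by positivity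
  -- eliminate second derivative of v
  have hden : (1 - 2*M/(2*M*z)) ≠ 0 := by
    have h : 2*M/(2*M*z) = 1/z := by
      field_simp
    rw [h]
    have : 1/z < 1 := by
      rw [div_lt_one (by linarith : (0:ℝ) < z)]; exact hz1
    linarith
  have hC : deriv (deriv v) (2*M*z) =
      (((ℓ*(ℓ+1):ℝ)/(2*M*z)^2 + 2*M*σ/(2*M*z)^3) * v (2*M*z)
        - (2*M/(2*M*z)^2) * deriv v (2*M*z)) / (1 - 2*M/(2*M*z)) := by
    rw [eq_div_iff hden]
    linear_combination -hO
  rw [hdd, hdu1]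
  simp only [hwdef, hu]
  subst hσ
  have hM0 : M ≠ 0 := ne_of_gt hM
  have hzz : z - 1 ≠ 0 := by linarith
  have hPz : z ^ s ≠ 0 := pow_ne_zero _ hz0
  simp only [show 1 + s = s + 1 from add_comm 1 s, show 2 + s = s + 2 from add_comm 2 s,
    pow_add, pow_one]
  have hO2 : -(4*M^2)*z^2*(z-1) * deriv (deriv v) (2*M*z) - 2*M*z * deriv v (2*M*z) +
      ((ℓ*(ℓ+1):ℝ)*z + 1 - (s:ℝ)^2) * v (2*M*z) = 0 := by
    field_simp at hO
    have hM6 : (64*M^6*z^5 : ℝ) ≠ 0 := by positivity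
    apply mul_left_cancel₀ hM6
    rw [mul_zero]
    linear_combination (64*M^6*z^5) * hO
  field_simp
  rw [show z*2*M = 2*M*z by ring]
  push_cast
  linear_combination hO2
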